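/- Let $u, v \in S^n$ be perpendicular unit vectors, $p(\theta) = u\cos\theta + v\sin\theta$ for $0 < \theta < \pi$, and $p'(\theta) = -u\sin\theta + v\cos\theta$. If $k_1$ is an increasing function on $[-1,1]$ and $\tau \in (-1,1)$, then $\int_{\{x \in S^n : x\cdot p = \tau\}} k_1(u\cdot x)\,(x\cdot p')\, d\mathcal{H}^{n-1}(x) \le 0$. -/

import Mathlib

set_option maxHeartbeats 1000000


open MeasureTheory Metric Set Real
open scoped RealInnerProductSpace

noncomputable section

/-- For perpendicular unit vectors `u, v`, `p(θ) = cos θ • u + sin θ • v`,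
`p'(θ) = -sin θ • u + cos θ • v`, `k₁` increasing on `[-1,1]` and `τ ∈ (-1,1)`,
the slice integral `∫_{x·p = τ} k₁(u·x) (x·p') dH^{n-1}(x)` is nonpositive. -/
theorem stmt_2 (n : ℕ) (u v : EuclideanSpace ℝ (Fin (n + 1)))
    (hu : ‖u‖ = 1) (hv : ‖v‖ = 1) (huv : ⟪u, v⟫ = 0)
    (θ : ℝ) (hθ : θ ∈ Ioo 0 π)
    (k₁ : ℝ → ℝ) (hk : MonotoneOn k₁ (Icc (-1 : ℝ) 1))
    (τ : ℝ) (hτ : τ ∈ Ioo (-1 : ℝ) 1) :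
    (∫ x in {x ∈ sphere (0 : EuclideanSpace ℝ (Fin (n + 1))) 1 |
        ⟪x, Real.cos θ • u + Real.sin θ • v⟫ = τ},
      k₁ ⟪u, x⟫ * ⟪x, (-Real.sin θ) • u + Real.cos θ • v⟫ ∂μH[(n : ℝ) - 1]) ≤ 0 := by
  let E := EuclideanSpace ℝ (Fin (n + 1))
  set p : E := Real.cos θ • u + Real.sin θ • v with hp
  set q : E := (-Real.sin θ) • u + Real.cos θ • v with hq
  set S : Set E := {x ∈ sphere (0 : E) 1 | ⟪x, p⟫ = τ} with hS
  set μ : Measure E := μH[(n : ℝ) - 1]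
  set f : E → ℝ := fun x => k₁ ⟪u, x⟫ * ⟪x, q⟫ with hf
  have huu : ⟪u, u⟫ = 1 := by
    rw [real_inner_self_eq_norm_sq, hu]; norm_num
  have hvv : ⟪v, v⟫ = 1 := by
    rw [real_inner_self_eq_norm_sq, hv]; norm_num
  have hvu : ⟪v, u⟫ = 0 := by rw [real_inner_comm]; exact huv
  have sinpos : 0 < Real.sin θ := Real.sin_pos_of_pos_of_lt_pi hθ.1 hθ.2
  -- basic inner products with q
  have hqq : ⟪q, q⟫ = 1 := by
    simp only [hq, inner_add_left, inner_add_right, real_inner_smul_left,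
      real_inner_smul_right, huu, hvv, huv, hvu]
    nlinarith [Real.sin_sq_add_cos_sq θ]
  have hnq : ‖q‖ = 1 := by
    have := real_inner_self_eq_norm_sq q
    rw [hqq] at this
    nlinarith [norm_nonneg q]
  have hqp : ⟪q, p⟫ = 0 := by
    simp only [hq, hp, inner_add_left, inner_add_right, real_inner_smul_left,
      real_inner_smul_right, huu, hvv, huv, hvu]
    ring
  have huq : ⟪u, q⟫ = -Real.sin θ := by
    simp only [hq, inner_add_right, real_inner_smul_right, huu, huv]
    ring
  -- the reflection
  set e : E ≃ₗᵢ[ℝ] E := Submodule.reflection (ℝ ∙ q)ᗮ with he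
  have he_apply : ∀ x : E, e x = x - (2 * ⟪q, x⟫) • q := by
    intro x
    rw [he, Submodule.reflection_apply, Submodule.starProjection_orthogonal_val,
      Submodule.starProjection_singleton]
    rw [hnq]
    push_cast
    simp only [one_pow, div_one]
    rw [two_smul]
    module
  have he_inner_q : ∀ x : E, ⟪e x, q⟫ = -⟪x, q⟫ := by
    intro x
    rw [he_apply, inner_sub_left, real_inner_smul_left, real_inner_comm x q, hqq]
    ring
  have he_inner_u : ∀ x : E, ⟪u, e x⟫ = ⟪u, x⟫ + 2 * Real.sin θ * ⟪x, q⟫ := by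
    intro x
    rw [he_apply, inner_sub_right, real_inner_smul_right, huq, real_inner_comm q x]
    ring
  have he_inner_p : ∀ x : E, ⟪e x, p⟫ = ⟪x, p⟫ := by
    intro x
    rw [he_apply, inner_sub_left, real_inner_smul_left, hqp]
    ring
  -- e maps S to S
  have he_mem : ∀ x : E, e x ∈ S ↔ x ∈ S := by
    intro x
    simp only [hS, mem_setOf_eq, mem_sphere_iff_norm, mem_sphere_zero_iff_norm, sub_zero, e.norm_map, he_inner_p]
  have he_preimage : e ⁻¹' S = S := by
    ext x; simp only [mem_preimage]; exact he_mem x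
  -- measurability of S
  have hSmeas : MeasurableSet S := by
    have : S = sphere (0 : E) 1 ∩ {x : E | ⟪x, p⟫ = τ} := by
      ext x; simp [hS, mem_sphere_iff_norm]
    rw [this]
    exact (isClosed_sphere.measurableSet).inter
      ((isClosed_eq (continuous_id.inner continuous_const) continuous_const).measurableSet)
  -- measure preservation
  have hmp : MeasurePreserving (⇑e) μ μ :=
    e.toIsometryEquiv.measurePreserving_hausdorffMeasure _
  have hemb : MeasurableEmbedding (⇑e) :=
    e.toIsometryEquiv.toHomeomorph.measurableEmbedding
  by_cases hI : IntegrableOn f S μ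
  · -- change of variables
    have hcov : ∫ x in S, f (e x) ∂μ = ∫ x in S, f x ∂μ := by
      conv_lhs => rw [← he_preimage]
      exact hmp.setIntegral_preimage_emb hemb f S
    have hIe : IntegrableOn (fun x => f (e x)) S μ := by
      have := (hmp.restrict_preimage hSmeas).integrable_comp_emb hemb (g := f)
      rw [he_preimage] at this
      exact this.mpr hI
    -- pointwise bound on S
    have hpt : ∀ x ∈ S, f x + f (e x) ≤ 0 := by
      intro x hx
      have hnx : ‖x‖ = 1 := by
        have := hx.1; rwa [mem_sphere_iff_norm, sub_zero] at this
      have hnex : ‖e x‖ = 1 := by rw [e.norm_map]; exact hnx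
      set a := ⟪u, x⟫ with ha
      set t := ⟪x, q⟫ with ht
      have hfx : f x = k₁ a * t := rfl
      have hfex : f (e x) = k₁ (a + 2 * Real.sin θ * t) * (-t) := by
        rw [hf]; simp only [he_inner_u, he_inner_q]; rfl
      rw [hfx, hfex]
      have haI : a ∈ Icc (-1 : ℝ) 1 := by
        have := abs_real_inner_le_norm u x
        rw [hu, hnx] at this
        constructor <;> [linarith [neg_abs_le a]; linarith [le_abs_self a]]
      have hbI : a + 2 * Real.sin θ * t ∈ Icc (-1 : ℝ) 1 := by
        have := abs_real_inner_le_norm u (e x)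
        rw [hu, hnex, he_inner_u] at this
        constructor <;>
          [linarith [neg_abs_le (a + 2 * Real.sin θ * t)];
           linarith [le_abs_self (a + 2 * Real.sin θ * t)]]
      rcases le_or_gt 0 t with h0 | h0
      · have : k₁ a ≤ k₁ (a + 2 * Real.sin θ * t) :=
          hk haI hbI (by nlinarith)
        nlinarith
      · have : k₁ (a + 2 * Real.sin θ * t) ≤ k₁ a :=
          hk hbI haI (by nlinarith)
        nlinarith
    have hsum : ∫ x in S, (f x + f (e x)) ∂μ ≤ 0 :=
      setIntegral_nonpos hSmeas hpt
    rw [integral_add hI hIe, hcov] at hsum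
    have : ∫ x in S, f x ∂μ ≤ 0 := by linarith
    exact this
  · rw [integral_undef hI]
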